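/- The map π_k : A₂(k) → R[k] from the span of admissible Steenrod monomials of length ≤ k to the length-k component of the Dyer-Lashof algebra, defined by π_k(Q^I) = Q^I (Q^0)^{k−ℓ(I)} (rewritten into admissible form via homology Adem relations), is a surjection of 𝔽₂-vector spaces (indeed of coalgebras): for every admissible nonnegative-excess I = Σ_{t=0}^{k−1} a_t I_{k,t} of length k with Σ a_t > 0, there exists K ∈ A₂(k) with π_k(K) = Q^I. -/

import Mathlib

noncomputable section

abbrev F : Type := FreeAlgebra (ZMod 2) ℕ

def Q (i : ℕ) : F := FreeAlgebra.ι (ZMod 2) i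

/-- The monomial `Q^I` for `I = [i_k,...,i_1]` (written left to right). -/
def QI (I : List ℕ) : F := (I.map Q).prod

/-- Binomial coefficient mod 2 with possibly negative arguments (zero out of range). -/
def ch (m n : ℤ) : ZMod 2 :=
  if 0 ≤ m ∧ 0 ≤ n then ((m.toNat).choose n.toNat : ZMod 2) else 0

/-- The relations presenting the mod 2 Dyer-Lashof algebra: the homology Adem relations
`Q^r Q^s = Σ_{t>0} C(t−s−1, 2t−r) Q^{r+s−t} Q^t` for `r > 2s`, and the vanishing of
monomials of negative excess. -/
inductive dlRel : F → F → Prop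
  | adem (r s : ℕ) (h : 2 * s < r) :
      dlRel (Q r * Q s)
        (∑ t ∈ Finset.Icc 1 (r + s),
          ch ((t : ℤ) - s - 1) (2 * t - r) • (Q (r + s - t) * Q t))
  | excess (L : List ℕ) (h : ((L.headD 0 : ℤ)) < ((L.tail.sum : ℕ) : ℤ)) :
      dlRel (QI L) 0

/-- The mod 2 Dyer-Lashof algebra `ℛ`. -/
abbrev R : Type := RingQuot dlRel

def mkR : F →ₐ[ZMod 2] R := RingQuot.mkAlgHom (ZMod 2) dlRel

/-- Madsen's sequences `I_{k,t}` (index `i` = `(i+1)`-st entry from the right). -/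
def Ikt (k t : ℕ) : ℕ → ℕ := fun i =>
  if i < k then (if k ≤ i + t then 2 ^ i - 2 ^ (i + t - k) else 2 ^ i) else 0

/-- The monomial `Q^I` for a sequence given as a function `ℕ → ℕ` supported on
`{0,...,k−1}` (leftmost factor is the top entry, index `k−1`). -/
def QF (k : ℕ) (f : ℕ → ℕ) : F := (((List.range k).reverse).map fun i => Q (f i)).prod

/-- Steenrod admissibility for a monomial written as a list `[s_m,...,s_1]` :
`s_{t+1} ≥ 2 s_t` for all `t`. -/
def StAdmissible (L : List ℕ) : Prop := List.Chain' (fun x y => 2 * y ≤ x) L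

-- auxiliary lemmas
lemma QI_nil : QI [] = 1 := rfl
lemma QI_cons (a : ℕ) (L : List ℕ) : QI (a :: L) = Q a * QI L := by simp [QI]
lemma QI_append (L₁ L₂ : List ℕ) : QI (L₁ ++ L₂) = QI L₁ * QI L₂ := by simp [QI]
lemma QI_replicate (j : ℕ) : QI (List.replicate j 0) = Q 0 ^ j := by
  simp [QI, List.map_replicate, List.prod_replicate]

lemma add_self_R (a : R) : a + a = 0 := by
  rw [← two_smul (ZMod 2) a, show (2 : ZMod 2) = 0 from rfl, zero_smul]

lemma mkR_rel {a b : F} (h : dlRel a b) : mkR a = mkR b :=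
  RingQuot.mkAlgHom_rel (ZMod 2) h

lemma ch_zero_right {m : ℤ} (h : 0 ≤ m) : ch m 0 = 1 := by simp [ch, h]
lemma ch_neg_right {m n : ℤ} (h : n < 0) : ch m n = 0 := by
  rw [ch, if_neg]; omega

lemma adm_tail {a : ℕ} {L : List ℕ} (h : StAdmissible (a :: L)) : StAdmissible L :=
  List.IsChain.tail h

lemma adm_head {a : ℕ} {L : List ℕ} (h : StAdmissible (a :: L)) : 2 * L.headD 0 ≤ a := by
  cases L with
  | nil => simp
  | cons b M => exact (List.isChain_cons_cons.mp h).1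

lemma adm_cons {a : ℕ} {L : List ℕ} (hL : StAdmissible L) (h : 2 * L.headD 0 ≤ a) :
    StAdmissible (a :: L) := by
  cases L with
  | nil => simp [StAdmissible, List.Chain']
  | cons b M => exact List.isChain_cons_cons.mpr ⟨h, hL⟩

def good (n D : ℕ) (L : List ℕ) : Prop :=
  L.length ≤ n ∧ StAdmissible L ∧ (∀ x ∈ L, 1 ≤ x) ∧ L.sum = D

def SpanR (n D : ℕ) (y : R) : Prop :=
  ∃ c : Finset (List ℕ),
    (∀ L ∈ c, good n D L) ∧ (∑ L ∈ c, mkR (QI L * Q 0 ^ (n - L.length))) = y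

lemma SpanR_zero (n D : ℕ) : SpanR n D 0 := ⟨∅, by simp, by simp⟩

lemma SpanR_add {n D : ℕ} {y z : R} (hy : SpanR n D y) (hz : SpanR n D z) :
    SpanR n D (y + z) := by
  classical
  obtain ⟨s, hs, hsum⟩ := hy
  obtain ⟨t, ht, htsum⟩ := hz
  set g : List ℕ → R := fun L => mkR (QI L * Q 0 ^ (n - L.length)) with hg
  refine ⟨(s ∪ t) \ (s ∩ t), ?_, ?_⟩
  · intro L hL
    rcases Finset.mem_union.mp (Finset.mem_sdiff.mp hL).1 with h | h
    · exact hs L h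
    · exact ht L h
  · have h1 : ∑ L ∈ (s ∪ t) \ (s ∩ t), g L + ∑ L ∈ s ∩ t, g L = ∑ L ∈ s ∪ t, g L :=
      Finset.sum_sdiff (Finset.inter_subset_union)
    have h2 : ∑ L ∈ s ∪ t, g L + ∑ L ∈ s ∩ t, g L = ∑ L ∈ s, g L + ∑ L ∈ t, g L :=
      Finset.sum_union_inter
    have key : ∑ L ∈ (s ∪ t) \ (s ∩ t), g L = ∑ L ∈ s, g L + ∑ L ∈ t, g L := by
      calc ∑ L ∈ (s ∪ t) \ (s ∩ t), g L
          = (∑ L ∈ (s ∪ t) \ (s ∩ t), g L + ∑ L ∈ s ∩ t, g L) + ∑ L ∈ s ∩ t, g L := by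
            rw [add_assoc, add_self_R, add_zero]
        _ = ∑ L ∈ s, g L + ∑ L ∈ t, g L := by rw [h1, h2]
    rw [key, hsum, htsum]

lemma SpanR_sum {n D : ℕ} {ι : Type*} (s : Finset ι) (g : ι → R)
    (h : ∀ i ∈ s, SpanR n D (g i)) : SpanR n D (∑ i ∈ s, g i) := by
  classical
  induction s using Finset.induction_on with
  | empty => simpa using SpanR_zero n D
  | insert _ _ hx ih =>
    rw [Finset.sum_insert hx]
    exact SpanR_add (h _ (Finset.mem_insert_self _ _))
      (ih fun i hi => h i (Finset.mem_insert_of_mem hi))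

lemma SpanR_smul {n D : ℕ} (z : ZMod 2) {y : R} (h : SpanR n D y) : SpanR n D (z • y) := by
  fin_cases z
  · show SpanR n D ((0 : ZMod 2) • y); simpa using SpanR_zero n D
  · show SpanR n D ((1 : ZMod 2) • y); simpa using h

lemma SpanR_of_good {n D : ℕ} (L : List ℕ) (h : good n D L) (j : ℕ)
    (hj : j = n - L.length) : SpanR n D (mkR (QI L * Q 0 ^ j)) := by
  subst hj
  exact ⟨{L}, by simpa using h, by simp⟩

lemma kill (x : ℕ) (L : List ℕ) (j : ℕ) (h : x < L.sum) :
    mkR (QI (x :: L) * Q 0 ^ j) = 0 := by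
  have h0 : QI (x :: L) * Q 0 ^ j = QI (x :: (L ++ List.replicate j 0)) := by
    simp [QI_cons, QI_append, QI_replicate, mul_assoc]
  have hs : (L ++ List.replicate j 0).sum = L.sum := by simp
  have hrel := mkR_rel (dlRel.excess (x :: (L ++ List.replicate j 0))
    (by simp only [List.headD_cons, List.tail_cons, hs]; exact_mod_cast h))
  rw [h0, hrel, map_zero]


theorem spanned_gen : ∀ (n : ℕ) (w : List ℕ), w.length = n → SpanR n w.sum (mkR (QI w)) := by
  intro n
  induction n with
  | zero =>
    intro w hw
    have hnil : w = [] := List.length_eq_zero_iff.mp hw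
    subst hnil
    exact ⟨{[]}, by simp [good, StAdmissible, List.Chain'], by simp [QI_nil]⟩
  | succ n ihn =>
    -- the shape lemma: words of the form x :: L ++ 0^j with L admissible & positive
    have shape : ∀ (m x : ℕ) (L : List ℕ) (j : ℕ), StAdmissible L → (∀ y ∈ L, 1 ≤ y) →
        L.length + j = n → x + L.sum < L.headD 0 + m →
        SpanR (n+1) (x + L.sum) (mkR (QI (x :: L) * Q 0 ^ j)) := by
      intro m
      induction m with
      | zero =>
        intro x L j _ hpos _ hfuel
        exfalso
        cases L with
        | nil => simp at hfuel
        | cons l₁ rest =>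
          have h1 : 1 ≤ l₁ := hpos l₁ (by simp)
          simp [List.sum_cons] at hfuel
          omega
      | succ m ihm =>
        intro x L j hadm hpos hlen hfuel
        cases L with
        | nil =>
          have hj : j = n := by simpa using hlen
          subst hj
          by_cases hx : x = 0
          · subst hx
            refine ⟨{[]}, by simp [good, StAdmissible, List.Chain'], ?_⟩
            simp [QI_nil, QI_cons]
            rw [← pow_succ']
          · refine ⟨{[x]}, ?_, ?_⟩
            · intro L hL
              simp at hL
              subst hL
              exact ⟨by simp, by simp [StAdmissible, List.Chain'], by simpa using Nat.one_le_iff_ne_zero.mpr hx, by simp⟩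
            · simp [QI_cons, QI_nil]
        | cons l₁ rest =>
          have h1 : 1 ≤ l₁ := hpos l₁ (by simp)
          by_cases hst : 2 * l₁ ≤ x
          · -- Steenrod-admissible already
            refine SpanR_of_good (x :: l₁ :: rest) ⟨?_, ?_, ?_, ?_⟩ j ?_
            · simp at hlen ⊢; omega
            · exact adm_cons hadm (by simpa using hst)
            · intro y hy
              rcases List.mem_cons.mp hy with h | h
              · omega
              · exact hpos y h
            · rfl
            · simp at hlen ⊢; omega
          · by_cases hxs : x < (l₁ :: rest).sum
            · rw [kill x (l₁ :: rest) j hxs]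
              exact SpanR_zero _ _
            · -- the Adem step
              push_neg at hst hxs
              have hxl : l₁ ≤ x := le_trans (by simp [List.sum_cons]) hxs
              have hlenr : rest.length + 1 + j = n := by simpa using hlen
              have hfuel' : x + (l₁ + rest.sum) < l₁ + (m+1) := by
                simpa using hfuel
              -- the Adem relation at the top pair
              have hrel := mkR_rel (dlRel.adem (2*l₁) (x - l₁) (by omega))
              rw [show 2 * l₁ + (x - l₁) = x + l₁ by omega] at hrel
              rw [map_sum] at hrel
              simp only [map_smul] at hrel
              have hmem : l₁ ∈ Finset.Icc 1 (x + l₁) := by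
                simp only [Finset.mem_Icc]; omega
              rw [← Finset.sum_erase_add _ _ hmem] at hrel
              rw [show x + l₁ - l₁ = x by omega] at hrel
              rw [show (2 * (l₁:ℤ) - ((2 * l₁ : ℕ) : ℤ)) = 0 by push_cast; ring] at hrel
              rw [ch_zero_right (by omega), one_smul] at hrel
              have h5 : mkR (Q x * Q l₁) = mkR (Q (2*l₁) * Q (x - l₁)) +
                  ∑ t ∈ (Finset.Icc 1 (x + l₁)).erase l₁,
                    ch ((t:ℤ) - ((x - l₁ : ℕ) : ℤ) - 1) (2 * (t:ℤ) - ((2 * l₁ : ℕ) : ℤ)) •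
                      mkR (Q (x + l₁ - t) * Q t) := by
                rw [hrel, add_comm _ (mkR (Q x * Q l₁)), add_assoc, add_self_R, add_zero]
              have hword : mkR (QI (x :: l₁ :: rest) * Q 0 ^ j) =
                  mkR (Q x * Q l₁) * mkR (QI rest * Q 0 ^ j) := by
                rw [← map_mul]; congr 1; simp [QI_cons, mul_assoc]
              rw [hword, h5, add_mul, Finset.sum_mul]
              refine SpanR_add ?_ (SpanR_sum _ _ fun t ht => ?_)
              · -- the leading (Steenrod-direction) term
                set v : List ℕ := (x - l₁) :: (rest ++ List.replicate j 0) with hv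
                obtain ⟨c', hg', hEq'⟩ := ihn v (by simp [hv]; omega)
                have hvsum : v.sum = (x - l₁) + rest.sum := by simp [hv]
                have hvQ : mkR (QI v) = mkR (Q (x - l₁)) * mkR (QI rest * Q 0 ^ j) := by
                  rw [← map_mul]; congr 1
                  simp [hv, QI_cons, QI_append, QI_replicate, mul_assoc]
                have hA : mkR (Q (2*l₁) * Q (x - l₁)) * mkR (QI rest * Q 0 ^ j)
                    = ∑ L' ∈ c', mkR (QI (2*l₁ :: L') * Q 0 ^ (n - L'.length)) := by
                  rw [map_mul, mul_assoc, ← hvQ, ← hEq', Finset.mul_sum]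
                  refine Finset.sum_congr rfl fun L' _ => ?_
                  rw [← map_mul, QI_cons, mul_assoc]
                rw [hA]
                refine SpanR_sum _ _ fun L' hL' => ?_
                obtain ⟨hlen'', hadm'', hpos'', hsum''⟩ := hg' L' hL'
                rw [hvsum] at hsum''
                cases L' with
                | nil =>
                  simp only [List.sum_nil] at hsum''
                  refine SpanR_of_good (2*l₁ :: []) ⟨by simp, by simp [StAdmissible, List.Chain'], ?_, ?_⟩ _ ?_
                  · intro y hy; simp at hy; omega
                  · simp [List.sum_cons]; omega
                  · simp
                | cons h' M =>
                  have hlM : (h' :: M).length ≤ n := hlen''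
                  have hsM : (h' :: M).sum = x - l₁ + rest.sum := hsum''
                  by_cases hh : h' ≤ l₁
                  · refine SpanR_of_good (2*l₁ :: h' :: M) ⟨?_, adm_cons hadm'' (by simp; omega),
                      ?_, ?_⟩ _ ?_
                    · simp at hlM ⊢; omega
                    · intro y hy
                      rcases List.mem_cons.mp hy with h | h
                      · omega
                      · exact hpos'' y h
                    · simp [List.sum_cons] at hsM ⊢; try omega
                    · simp at hlM ⊢; try omega
                  · push_neg at hh
                    have hsh := ihm (2*l₁) (h' :: M) (n - (h' :: M).length) hadm'' hpos''
                      (by omega) ?_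
                    · have hD : 2*l₁ + (h' :: M).sum = x + (l₁ :: rest).sum := by
                        simp [List.sum_cons] at hsM ⊢; omega
                      rw [hD] at hsh
                      exact hsh
                    · simp only [List.headD_cons]
                      simp [List.sum_cons] at hsM ⊢
                      try omega
              · -- the correction terms
                obtain ⟨hne, htIcc⟩ := Finset.mem_erase.mp ht
                obtain ⟨ht1, ht2⟩ := Finset.mem_Icc.mp htIcc
                rw [smul_mul_assoc]
                by_cases hlt : t < l₁
                · rw [ch_neg_right (show (2 * (t:ℤ) - ((2 * l₁ : ℕ) : ℤ)) < 0 by omega),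
                    zero_smul]
                  exact SpanR_zero _ _
                · have hgt : l₁ < t := by omega
                  apply SpanR_smul
                  have hword2 : mkR (Q (x + l₁ - t) * Q t) * mkR (QI rest * Q 0 ^ j) =
                      mkR (QI ((x + l₁ - t) :: t :: rest) * Q 0 ^ j) := by
                    rw [← map_mul]; congr 1; simp [QI_cons, mul_assoc]
                  rw [hword2]
                  have hsh := ihm (x + l₁ - t) (t :: rest) j
                    (adm_cons (adm_tail hadm) (le_trans (adm_head hadm) (by omega)))
                    ?_ ?_ ?_
                  · have hD : (x + l₁ - t) + (t :: rest).sum = x + (l₁ :: rest).sum := by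
                      simp [List.sum_cons]; omega
                    rw [hD] at hsh
                    exact hsh
                  · intro y hy
                    rcases List.mem_cons.mp hy with h | h
                    · omega
                    · exact hpos y (List.mem_cons_of_mem _ h)
                  · simp at hlenr ⊢; omega
                  · simp only [List.headD_cons]
                    simp [List.sum_cons]
                    omega
    -- main step
    intro w hw
    cases w with
    | nil => simp at hw
    | cons x v =>
      obtain ⟨c', hg', hEq'⟩ := ihn v (by simpa using hw)
      have hexp : mkR (QI (x :: v)) = ∑ L' ∈ c', mkR (QI (x :: L') * Q 0 ^ (n - L'.length)) := by
        rw [QI_cons, map_mul, ← hEq', Finset.mul_sum]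
        refine Finset.sum_congr rfl fun L' _ => ?_
        rw [← map_mul, QI_cons, mul_assoc]
      rw [List.sum_cons, hexp]
      refine SpanR_sum _ _ fun L' hL' => ?_
      obtain ⟨hlen', hadm', hpos', hsum'⟩ := hg' L' hL'
      have hsh := shape (x + v.sum + 1) x L' (n - L'.length) hadm' hpos' (by omega)
        (by rw [hsum']; omega)
      rw [hsum'] at hsh
      exact hsh

/-- The map `π_k : 𝒜₂(k) → R[k]`, `π_k(Q^I) = Q^I (Q^0)^{k−ℓ(I)}`, is surjective: every
admissible nonnegative-excess `I = Σ_t a_t I_{k,t}` of length `k` with `Σ a_t > 0` is the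
image of an element `K` of `𝒜₂(k)`, i.e. of an `𝔽₂`-combination of Steenrod-admissible
monomials of length `≤ k`. -/
theorem pi_k_surjective (k : ℕ) (hk : 1 ≤ k) (a : ℕ → ℕ)
    (hpos : 0 < ∑ t ∈ Finset.range k, a t) :
    ∃ c : Finset (List ℕ),
      (∀ L ∈ c, L.length ≤ k ∧ StAdmissible L ∧ ∀ x ∈ L, 1 ≤ x) ∧
      mkR (∑ L ∈ c, QI L * Q 0 ^ (k - L.length)) =
        mkR (QF k fun i => ∑ t ∈ Finset.range k, a t * Ikt k t i) := by
  set f : ℕ → ℕ := fun i => ∑ t ∈ Finset.range k, a t * Ikt k t i with hf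
  have hQF : QF k f = QI (((List.range k).reverse).map f) := by
    simp [QF, QI, List.map_map]
    rfl
  obtain ⟨c, hg, hEq⟩ := spanned_gen k (((List.range k).reverse).map f) (by simp)
  refine ⟨c, fun L hL => ?_, ?_⟩
  · obtain ⟨h1, h2, h3, _⟩ := hg L hL
    exact ⟨h1, h2, h3⟩
  · rw [map_sum, hQF, ← hEq]

end
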